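/- If Γ < α is provable in the calculus G (with Amalgamation, without ∗ rules), then there exist finitely many grounding bars G₁,…,Gₘ for α with Γ = G₁ ∪ … ∪ Gₘ. -/
import Mathlib


inductive Formula : Type
  | atom : ℕ → Formula
  | bot : Formula
  | and : Formula → Formula → Formula
  | or : Formula → Formula → Formula
  | neg : Formula → Formula
  deriving DecidableEq

namespace Formula

/-- The grounding calculus `G`, parameterised by whether the `∗` rules for
disjunction (and negated conjunction) are present (`star`) and whether the
Amalgamation rule is present (`am`).  Grounds are finite sets of formulas,
so set contraction is implicit. -/
inductive Proves (star am : Bool) : Finset Formula → Formula → Prop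
  -- 0-premiss rules
  | andI0 (α β : Formula) : Proves star am {α, β} (α.and β)
  | orI0l (α β : Formula) : Proves star am {α} (α.or β)
  | orI0r (α β : Formula) : Proves star am {β} (α.or β)
  | orI0both (α β : Formula) (h : star = true) : Proves star am {α, β} (α.or β)
  | nandI0l (α β : Formula) : Proves star am {α.neg} (α.and β).neg
  | nandI0r (α β : Formula) : Proves star am {β.neg} (α.and β).neg
  | nandI0both (α β : Formula) (h : star = true) : Proves star am {α.neg, β.neg} (α.and β).neg
  | norI0 (α β : Formula) : Proves star am {α.neg, β.neg} (α.or β).neg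
  | nnI0 (α : Formula) : Proves star am {α} α.neg.neg
  -- introduction rules
  | andI {Γ Δ : Finset Formula} {α β : Formula} : Proves star am Γ α → Proves star am Δ β →
      Proves star am (Γ ∪ Δ) (α.and β)
  | orIl {Γ : Finset Formula} {α β : Formula} : Proves star am Γ α → Proves star am Γ (α.or β)
  | orIr {Γ : Finset Formula} {α β : Formula} : Proves star am Γ β → Proves star am Γ (α.or β)
  | orIboth {Γ Δ : Finset Formula} {α β : Formula} (h : star = true) : Proves star am Γ α → Proves star am Δ β →
      Proves star am (Γ ∪ Δ) (α.or β)
  | nandIl {Γ : Finset Formula} {α β : Formula} : Proves star am Γ α.neg → Proves star am Γ (α.and β).neg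
  | nandIr {Γ : Finset Formula} {α β : Formula} : Proves star am Γ β.neg → Proves star am Γ (α.and β).neg
  | nandIboth {Γ Δ : Finset Formula} {α β : Formula} (h : star = true) : Proves star am Γ α.neg → Proves star am Δ β.neg →
      Proves star am (Γ ∪ Δ) (α.and β).neg
  | norI {Γ Δ : Finset Formula} {α β : Formula} : Proves star am Γ α.neg → Proves star am Δ β.neg →
      Proves star am (Γ ∪ Δ) (α.or β).neg
  | nnI {Γ : Finset Formula} {α : Formula} : Proves star am Γ α → Proves star am Γ α.neg.neg
  -- elimination rules (replacing a member of the ground)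
  | andE {Γ : Finset Formula} {β γ δ : Formula} (h : (β.and γ) ∈ Γ) : Proves star am Γ δ →
      Proves star am (Γ.erase (β.and γ) ∪ {β, γ}) δ
  | orEl {Γ : Finset Formula} {β γ δ : Formula} (h : (β.or γ) ∈ Γ) : Proves star am Γ δ →
      Proves star am (Γ.erase (β.or γ) ∪ {β}) δ
  | orEr {Γ : Finset Formula} {β γ δ : Formula} (h : (β.or γ) ∈ Γ) : Proves star am Γ δ →
      Proves star am (Γ.erase (β.or γ) ∪ {γ}) δ
  | orEboth {Γ : Finset Formula} {β γ δ : Formula} (hs : star = true) (h : (β.or γ) ∈ Γ) : Proves star am Γ δ →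
      Proves star am (Γ.erase (β.or γ) ∪ {β, γ}) δ
  | nandEl {Γ : Finset Formula} {β γ δ : Formula} (h : (β.and γ).neg ∈ Γ) : Proves star am Γ δ →
      Proves star am (Γ.erase (β.and γ).neg ∪ {β.neg}) δ
  | nandEr {Γ : Finset Formula} {β γ δ : Formula} (h : (β.and γ).neg ∈ Γ) : Proves star am Γ δ →
      Proves star am (Γ.erase (β.and γ).neg ∪ {γ.neg}) δ
  | nandEboth {Γ : Finset Formula} {β γ δ : Formula} (hs : star = true) (h : (β.and γ).neg ∈ Γ) : Proves star am Γ δ →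
      Proves star am (Γ.erase (β.and γ).neg ∪ {β.neg, γ.neg}) δ
  | norE {Γ : Finset Formula} {β γ δ : Formula} (h : (β.or γ).neg ∈ Γ) : Proves star am Γ δ →
      Proves star am (Γ.erase (β.or γ).neg ∪ {β.neg, γ.neg}) δ
  | nnE {Γ : Finset Formula} {β δ : Formula} (h : β.neg.neg ∈ Γ) : Proves star am Γ δ →
      Proves star am (Γ.erase β.neg.neg ∪ {β}) δ
  -- Amalgamation
  | am {Γ Δ : Finset Formula} {α : Formula} (h : am = true) : Proves star am Γ α → Proves star am Δ α →
      Proves star am (Γ ∪ Δ) α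

/-- The formula at a node, with `~` prefixed when the node is negative. -/
def sgn (pos : Bool) (α : Formula) : Formula := if pos then α else α.neg

/-- `BarRel star pos α B`: `B` is (the set of signed formulas of) a bar of some
selection tree of the syntactic tree of `α`, where `α`'s root lies at polarity
`pos` (positive/negative according to the parity of `~`-nodes above it).
The trivial bar `{sgn pos α}` (containing the root) is included; feeble nodes
(positive `∨`-nodes, negative `∧`-nodes) have exactly one child kept, or
possibly both when the `∗` rules are present (`star = true`). -/
inductive BarRel (star : Bool) : Bool → Formula → Finset Formula → Prop
  | triv (pos : Bool) (α : Formula) : BarRel star pos α {sgn pos α}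
  | and_pos {β γ : Formula} {B₁ B₂ : Finset Formula} : BarRel star true β B₁ → BarRel star true γ B₂ →
      BarRel star true (β.and γ) (B₁ ∪ B₂)
  | and_neg_l {β γ : Formula} {B : Finset Formula} : BarRel star false β B → BarRel star false (β.and γ) B
  | and_neg_r {β γ : Formula} {B : Finset Formula} : BarRel star false γ B → BarRel star false (β.and γ) B
  | and_neg_both {β γ : Formula} {B₁ B₂ : Finset Formula} (h : star = true) :
      BarRel star false β B₁ → BarRel star false γ B₂ →
      BarRel star false (β.and γ) (B₁ ∪ B₂)
  | or_pos_l {β γ : Formula} {B : Finset Formula} : BarRel star true β B → BarRel star true (β.or γ) B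
  | or_pos_r {β γ : Formula} {B : Finset Formula} : BarRel star true γ B → BarRel star true (β.or γ) B
  | or_pos_both {β γ : Formula} {B₁ B₂ : Finset Formula} (h : star = true) :
      BarRel star true β B₁ → BarRel star true γ B₂ →
      BarRel star true (β.or γ) (B₁ ∪ B₂)
  | or_neg {β γ : Formula} {B₁ B₂ : Finset Formula} : BarRel star false β B₁ → BarRel star false γ B₂ →
      BarRel star false (β.or γ) (B₁ ∪ B₂)
  | neg (pos) {β : Formula} {B : Finset Formula} : BarRel star (!pos) β B → BarRel star pos β.neg B

/-- A grounding bar for `α`: a bar of a selection tree of `α` (with `~`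
prefixed at negative nodes) which is non-trivial, i.e. neither contains the
root nor the (signed) only child of the root, which amounts to the bar not
being the singleton of `α` itself. -/
def GroundingBar (star : Bool) (α : Formula) (B : Finset Formula) : Prop :=
  BarRel star true α B ∧ B ≠ {α}

/-- Subformula relation. -/
inductive Sub : Formula → Formula → Prop
  | refl (α : Formula) : Sub α α
  | and_l {α β γ : Formula} : Sub α β → Sub α (β.and γ)
  | and_r {α β γ : Formula} : Sub α γ → Sub α (β.and γ)
  | or_l {α β γ : Formula} : Sub α β → Sub α (β.or γ)
  | or_r {α β γ : Formula} : Sub α γ → Sub α (β.or γ)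
  | neg {α β : Formula} : Sub α β → Sub α β.neg

/-- Proper subformula. -/
def ProperSub (α β : Formula) : Prop := Sub α β ∧ α ≠ β

end Formula

open Formula

namespace Formula

/-- Size of a formula. -/
def size : Formula → ℕ
  | atom _ => 1
  | bot => 1
  | and b c => size b + size c + 1
  | or b c => size b + size c + 1
  | neg b => size b + 1

lemma one_le_size (φ : Formula) : 1 ≤ size φ := by
  cases φ <;> simp [size]

lemma sgn_true (φ : Formula) : sgn true φ = φ := rfl

lemma sgn_false (φ : Formula) : sgn false φ = φ.neg := rfl

lemma size_sgn (p : Bool) (φ : Formula) : size (sgn p φ) ≤ size φ + 1 := by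
  cases p <;> simp [sgn, size]

lemma lt_size_and_l {b α β : Formula} (h : size b ≤ size α + 1) : size b < size (α.and β) := by
  have := one_le_size β; simp only [size]; omega

lemma lt_size_and_r {b α β : Formula} (h : size b ≤ size β + 1) : size b < size (α.and β) := by
  have := one_le_size α; simp only [size]; omega

lemma lt_size_or_l {b α β : Formula} (h : size b ≤ size α + 1) : size b < size (α.or β) := by
  have := one_le_size β; simp only [size]; omega

lemma lt_size_or_r {b α β : Formula} (h : size b ≤ size β + 1) : size b < size (α.or β) := by
  have := one_le_size α; simp only [size]; omega

lemma add_two_le_and_l {β γ : Formula} : size β + 2 ≤ size (β.and γ) := by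
  have := one_le_size γ; simp only [size]; omega

lemma add_two_le_and_r {β γ : Formula} : size γ + 2 ≤ size (β.and γ) := by
  have := one_le_size β; simp only [size]; omega

lemma add_two_le_or_l {β γ : Formula} : size β + 2 ≤ size (β.or γ) := by
  have := one_le_size γ; simp only [size]; omega

lemma add_two_le_or_r {β γ : Formula} : size γ + 2 ≤ size (β.or γ) := by
  have := one_le_size β; simp only [size]; omega

lemma bar_size {s p : Bool} {α : Formula} {B : Finset Formula}
    (h : BarRel s p α B) : ∀ b ∈ B, size b ≤ size α + 1 := by
  induction h with
  | triv p α =>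
      intro b hb; rw [Finset.mem_singleton] at hb; subst hb; exact size_sgn p α
  | and_pos h1 h2 ih1 ih2 =>
      intro b hb
      rcases Finset.mem_union.1 hb with h | h
      · have := ih1 b h; simp only [size]; omega
      · have := ih2 b h; simp only [size]; omega
  | and_neg_l h ih =>
      intro b hb; have := ih b hb; simp only [size]; omega
  | and_neg_r h ih =>
      intro b hb; have := ih b hb; simp only [size]; omega
  | and_neg_both hs h1 h2 ih1 ih2 =>
      intro b hb
      rcases Finset.mem_union.1 hb with h | h
      · have := ih1 b h; simp only [size]; omega
      · have := ih2 b h; simp only [size]; omega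
  | or_pos_l h ih =>
      intro b hb; have := ih b hb; simp only [size]; omega
  | or_pos_r h ih =>
      intro b hb; have := ih b hb; simp only [size]; omega
  | or_pos_both hs h1 h2 ih1 ih2 =>
      intro b hb
      rcases Finset.mem_union.1 hb with h | h
      · have := ih1 b h; simp only [size]; omega
      · have := ih2 b h; simp only [size]; omega
  | or_neg h1 h2 ih1 ih2 =>
      intro b hb
      rcases Finset.mem_union.1 hb with h | h
      · have := ih1 b h; simp only [size]; omega
      · have := ih2 b h; simp only [size]; omega
  | neg p h ih =>
      intro b hb; have := ih b hb; simp only [size]; omega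

lemma bar_nonempty {s p : Bool} {α : Formula} {B : Finset Formula}
    (h : BarRel s p α B) : B.Nonempty := by
  induction h with
  | triv p α => exact Finset.singleton_nonempty _
  | and_pos _ _ ih1 ih2 => exact Finset.Nonempty.mono Finset.subset_union_left ih1
  | and_neg_both _ _ _ ih1 ih2 => exact Finset.Nonempty.mono Finset.subset_union_left ih1
  | or_pos_both _ _ _ ih1 ih2 => exact Finset.Nonempty.mono Finset.subset_union_left ih1
  | or_neg _ _ ih1 ih2 => exact Finset.Nonempty.mono Finset.subset_union_left ih1
  | _ => assumption

lemma bar_of_neg {s : Bool} {ψ : Formula} {B : Finset Formula}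
    (h : BarRel s true ψ.neg B) : BarRel s false ψ B := by
  cases h with
  | triv => exact BarRel.triv false ψ
  | neg => assumption

lemma groundingBar_mk {α : Formula} {B : Finset Formula} (h : BarRel false true α B)
    (hsz : ∀ b ∈ B, size b < size α) : GroundingBar false α B := by
  refine ⟨h, ?_⟩
  rintro rfl
  exact absurd (hsz α (Finset.mem_singleton_self α)) (lt_irrefl _)

section eraseUnion

variable {σ : Type*} [DecidableEq σ] {B₁ B₂ C : Finset σ} {b : σ}

lemma erase_union_both :
    (B₁.erase b ∪ C) ∪ (B₂.erase b ∪ C) = (B₁ ∪ B₂).erase b ∪ C := by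
  ext x
  simp only [Finset.mem_union, Finset.mem_erase]
  tauto

lemma erase_union_left (h : b ∉ B₂) :
    (B₁.erase b ∪ C) ∪ B₂ = (B₁ ∪ B₂).erase b ∪ C := by
  ext x
  simp only [Finset.mem_union, Finset.mem_erase]
  constructor
  · rintro ((⟨hxb, hx⟩ | hx) | hx)
    · exact Or.inl ⟨hxb, Or.inl hx⟩
    · exact Or.inr hx
    · exact Or.inl ⟨fun e => h (e ▸ hx), Or.inr hx⟩
  · rintro (⟨hxb, hx | hx⟩ | hx) <;> tauto

lemma erase_union_right (h : b ∉ B₁) :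
    B₁ ∪ (B₂.erase b ∪ C) = (B₁ ∪ B₂).erase b ∪ C := by
  ext x
  simp only [Finset.mem_union, Finset.mem_erase]
  constructor
  · rintro (hx | (⟨hxb, hx⟩ | hx))
    · exact Or.inl ⟨fun e => h (e ▸ hx), Or.inl hx⟩
    · exact Or.inl ⟨hxb, Or.inr hx⟩
    · exact Or.inr hx
  · rintro (⟨hxb, hx | hx⟩ | hx) <;> tauto

end eraseUnion

/-- A bar may be refined at any of its elements: replace the element by a bar
of the subtree rooted at the corresponding node. -/
lemma bar_refine {s : Bool} {b : Formula} {C : Finset Formula}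
    (hC : ∀ q ψ, b = sgn q ψ → BarRel s q ψ C) :
    ∀ {p : Bool} {α : Formula} {B : Finset Formula},
      BarRel s p α B → b ∈ B → BarRel s p α (B.erase b ∪ C) := by
  intro p α B h
  induction h with
  | triv p α =>
      intro hb
      rw [Finset.mem_singleton] at hb
      subst hb
      rw [Finset.erase_singleton, Finset.empty_union]
      exact hC p α rfl
  | and_pos h1 h2 ih1 ih2 =>
      rename_i β' γ' B₁ B₂
      intro hb
      by_cases hb1 : b ∈ B₁ <;> by_cases hb2 : b ∈ B₂
      · rw [← erase_union_both]; exact .and_pos (ih1 hb1) (ih2 hb2)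
      · rw [← erase_union_left hb2]; exact .and_pos (ih1 hb1) h2
      · rw [← erase_union_right hb1]; exact .and_pos h1 (ih2 hb2)
      · exact absurd (Finset.mem_union.1 hb) (by tauto)
  | and_neg_l h ih => intro hb; exact .and_neg_l (ih hb)
  | and_neg_r h ih => intro hb; exact .and_neg_r (ih hb)
  | and_neg_both hs h1 h2 ih1 ih2 =>
      rename_i β' γ' B₁ B₂
      intro hb
      by_cases hb1 : b ∈ B₁ <;> by_cases hb2 : b ∈ B₂
      · rw [← erase_union_both]; exact .and_neg_both hs (ih1 hb1) (ih2 hb2)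
      · rw [← erase_union_left hb2]; exact .and_neg_both hs (ih1 hb1) h2
      · rw [← erase_union_right hb1]; exact .and_neg_both hs h1 (ih2 hb2)
      · exact absurd (Finset.mem_union.1 hb) (by tauto)
  | or_pos_l h ih => intro hb; exact .or_pos_l (ih hb)
  | or_pos_r h ih => intro hb; exact .or_pos_r (ih hb)
  | or_pos_both hs h1 h2 ih1 ih2 =>
      rename_i β' γ' B₁ B₂
      intro hb
      by_cases hb1 : b ∈ B₁ <;> by_cases hb2 : b ∈ B₂
      · rw [← erase_union_both]; exact .or_pos_both hs (ih1 hb1) (ih2 hb2)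
      · rw [← erase_union_left hb2]; exact .or_pos_both hs (ih1 hb1) h2
      · rw [← erase_union_right hb1]; exact .or_pos_both hs h1 (ih2 hb2)
      · exact absurd (Finset.mem_union.1 hb) (by tauto)
  | or_neg h1 h2 ih1 ih2 =>
      rename_i β' γ' B₁ B₂
      intro hb
      by_cases hb1 : b ∈ B₁ <;> by_cases hb2 : b ∈ B₂
      · rw [← erase_union_both]; exact .or_neg (ih1 hb1) (ih2 hb2)
      · rw [← erase_union_left hb2]; exact .or_neg (ih1 hb1) h2
      · rw [← erase_union_right hb1]; exact .or_neg h1 (ih2 hb2)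
      · exact absurd (Finset.mem_union.1 hb) (by tauto)
  | neg p h ih => intro hb; exact .neg p (ih hb)

lemma mem_sup_iff {𝒢 : Finset (Finset Formula)} {x : Formula} :
    x ∈ 𝒢.sup id ↔ ∃ G ∈ 𝒢, x ∈ G := by
  simp [Finset.mem_sup]

lemma sup_image₂ {𝒢 𝒟 : Finset (Finset Formula)} (h𝒢 : 𝒢.Nonempty) (h𝒟 : 𝒟.Nonempty) :
    (Finset.image₂ (· ∪ ·) 𝒢 𝒟).sup id = 𝒢.sup id ∪ 𝒟.sup id := by
  ext x
  simp only [Finset.mem_union, mem_sup_iff]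
  constructor
  · rintro ⟨v, hv, hx⟩
    rw [Finset.mem_image₂] at hv
    obtain ⟨a, ha, c, hc, rfl⟩ := hv
    rcases Finset.mem_union.1 hx with h | h
    · exact Or.inl ⟨a, ha, h⟩
    · exact Or.inr ⟨c, hc, h⟩
  · rintro (⟨a, ha, hx⟩ | ⟨c, hc, hx⟩)
    · obtain ⟨d, hd⟩ := h𝒟
      exact ⟨a ∪ d, Finset.mem_image₂.2 ⟨a, ha, d, hd, rfl⟩, Finset.mem_union_left _ hx⟩
    · obtain ⟨a, ha⟩ := h𝒢
      exact ⟨a ∪ c, Finset.mem_image₂.2 ⟨a, ha, c, hc, rfl⟩, Finset.mem_union_right _ hx⟩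

/-- The common argument for all elimination rules. -/
lemma elim_step {δ φ : Formula} {Γ S : Finset Formula} (hφΓ : φ ∈ Γ)
    (hS : ∀ q ψ, φ = sgn q ψ → BarRel false q ψ S)
    (hSne : S.Nonempty)
    (hSsz : ∀ t ∈ S, size t + 2 ≤ size φ)
    (IH : ∃ 𝒢 : Finset (Finset Formula), 𝒢.Nonempty ∧
      (∀ B ∈ 𝒢, GroundingBar false δ B) ∧ Γ = 𝒢.sup id) :
    ∃ 𝒢 : Finset (Finset Formula), 𝒢.Nonempty ∧
      (∀ B ∈ 𝒢, GroundingBar false δ B) ∧ Γ.erase φ ∪ S = 𝒢.sup id := by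
  obtain ⟨𝒢, hne, hgb, rfl⟩ := IH
  refine ⟨𝒢.image (fun G => if φ ∈ G then G.erase φ ∪ S else G), hne.image _, ?_, ?_⟩
  · intro B hB
    rw [Finset.mem_image] at hB
    obtain ⟨G, hG, rfl⟩ := hB
    by_cases hφG : φ ∈ G
    · rw [if_pos hφG]
      refine ⟨bar_refine hS (hgb G hG).1 hφG, ?_⟩
      intro heq
      obtain ⟨t, htS⟩ := hSne
      have ht : t ∈ G.erase φ ∪ S := Finset.mem_union_right _ htS
      rw [heq, Finset.mem_singleton] at ht
      subst ht
      have h1 := bar_size (hgb G hG).1 φ hφG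
      have h2 := hSsz t htS
      omega
    · rw [if_neg hφG]
      exact hgb G hG
  · ext x
    simp only [Finset.mem_union, Finset.mem_erase, mem_sup_iff, Finset.mem_image]
    constructor
    · rintro (⟨hxφ, G, hG, hxG⟩ | hx)
      · refine ⟨_, ⟨G, hG, rfl⟩, ?_⟩
        by_cases hφG : φ ∈ G
        · rw [if_pos hφG]
          exact Finset.mem_union_left _ (Finset.mem_erase.2 ⟨hxφ, hxG⟩)
        · rw [if_neg hφG]; exact hxG
      · rw [mem_sup_iff] at hφΓ
        obtain ⟨G, hG, hφG⟩ := hφΓ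
        exact ⟨_, ⟨G, hG, rfl⟩, by rw [if_pos hφG]; exact Finset.mem_union_right _ hx⟩
    · rintro ⟨B, ⟨G, hG, rfl⟩, hxB⟩
      by_cases hφG : φ ∈ G
      · rw [if_pos hφG] at hxB
        rcases Finset.mem_union.1 hxB with h | h
        · rw [Finset.mem_erase] at h
          exact Or.inl ⟨h.1, G, hG, h.2⟩
        · exact Or.inr h
      · rw [if_neg hφG] at hxB
        exact Or.inl ⟨fun e => hφG (e ▸ hxB), G, hG, hxB⟩

end Formula

/-- If `Γ < α` is provable in `G` (with Amalgamation, without the `∗` rules),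
then `Γ` is a union of finitely many grounding bars for `α`. -/
theorem provable_implies_union_of_grounding_bars (Γ : Finset Formula) (α : Formula)
    (h : Proves false true Γ α) :
    ∃ 𝒢 : Finset (Finset Formula), 𝒢.Nonempty ∧
      (∀ B ∈ 𝒢, GroundingBar false α B) ∧ Γ = 𝒢.sup id := by
  induction h with
  | andI0 α β =>
      refine ⟨{{α, β}}, Finset.singleton_nonempty _, ?_, Finset.sup_singleton.symm⟩
      intro B hB
      rw [Finset.mem_singleton] at hB; subst hB
      refine groundingBar_mk ?_ ?_
      · have hp : ({α, β} : Finset Formula) = {sgn true α} ∪ {sgn true β} := by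
          rw [sgn_true, sgn_true, ← Finset.insert_eq]
        rw [hp]
        exact .and_pos (.triv true α) (.triv true β)
      · intro b hb
        rcases Finset.mem_insert.1 hb with rfl | hb
        · exact lt_size_and_l (by omega)
        · rw [Finset.mem_singleton] at hb; subst hb
          exact lt_size_and_r (by omega)
  | orI0l α β =>
      refine ⟨{{α}}, Finset.singleton_nonempty _, ?_, Finset.sup_singleton.symm⟩
      intro B hB
      rw [Finset.mem_singleton] at hB; subst hB
      refine groundingBar_mk (.or_pos_l (.triv true α)) ?_
      intro b hb; rw [Finset.mem_singleton] at hb; subst hb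
      exact lt_size_or_l (by omega)
  | orI0r α β =>
      refine ⟨{{β}}, Finset.singleton_nonempty _, ?_, Finset.sup_singleton.symm⟩
      intro B hB
      rw [Finset.mem_singleton] at hB; subst hB
      refine groundingBar_mk (.or_pos_r (.triv true β)) ?_
      intro b hb; rw [Finset.mem_singleton] at hb; subst hb
      exact lt_size_or_r (by omega)
  | orI0both α β hs => exact absurd hs (by simp)
  | nandI0l α β =>
      refine ⟨{{α.neg}}, Finset.singleton_nonempty _, ?_, Finset.sup_singleton.symm⟩
      intro B hB
      rw [Finset.mem_singleton] at hB; subst hB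
      refine groundingBar_mk (.neg true (.and_neg_l (.triv false α))) ?_
      intro b hb; rw [Finset.mem_singleton] at hb; subst hb
      simp only [size]; have := one_le_size β; omega
  | nandI0r α β =>
      refine ⟨{{β.neg}}, Finset.singleton_nonempty _, ?_, Finset.sup_singleton.symm⟩
      intro B hB
      rw [Finset.mem_singleton] at hB; subst hB
      refine groundingBar_mk (.neg true (.and_neg_r (.triv false β))) ?_
      intro b hb; rw [Finset.mem_singleton] at hb; subst hb
      simp only [size]; have := one_le_size α; omega
  | nandI0both α β hs => exact absurd hs (by simp)
  | norI0 α β =>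
      refine ⟨{{α.neg, β.neg}}, Finset.singleton_nonempty _, ?_, Finset.sup_singleton.symm⟩
      intro B hB
      rw [Finset.mem_singleton] at hB; subst hB
      refine groundingBar_mk ?_ ?_
      · have hp : ({α.neg, β.neg} : Finset Formula) = {sgn false α} ∪ {sgn false β} := by
          rw [sgn_false, sgn_false, ← Finset.insert_eq]
        rw [hp]
        exact .neg true (.or_neg (.triv false α) (.triv false β))
      · intro b hb
        rcases Finset.mem_insert.1 hb with rfl | hb
        · simp only [size]; omega
        · rw [Finset.mem_singleton] at hb; subst hb
          simp only [size]; omega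
  | nnI0 α =>
      refine ⟨{{α}}, Finset.singleton_nonempty _, ?_, Finset.sup_singleton.symm⟩
      intro B hB
      rw [Finset.mem_singleton] at hB; subst hB
      refine groundingBar_mk (.neg true (.neg false (.triv true α))) ?_
      intro b hb; rw [Finset.mem_singleton] at hb; subst hb
      simp only [size]; omega
  | andI h1 h2 ih1 ih2 =>
      obtain ⟨𝒢, h𝒢ne, h𝒢, rfl⟩ := ih1
      obtain ⟨𝒟, h𝒟ne, h𝒟, rfl⟩ := ih2
      refine ⟨Finset.image₂ (· ∪ ·) 𝒢 𝒟, Finset.Nonempty.image₂ h𝒢ne h𝒟ne, ?_,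
        (sup_image₂ h𝒢ne h𝒟ne).symm⟩
      intro B hB
      rw [Finset.mem_image₂] at hB
      obtain ⟨G, hG, D, hD, rfl⟩ := hB
      refine groundingBar_mk (.and_pos (h𝒢 G hG).1 (h𝒟 D hD).1) ?_
      intro b hb
      rcases Finset.mem_union.1 hb with h | h
      · exact lt_size_and_l (bar_size (h𝒢 G hG).1 b h)
      · exact lt_size_and_r (bar_size (h𝒟 D hD).1 b h)
  | orIl h1 ih1 =>
      obtain ⟨𝒢, h𝒢ne, h𝒢, rfl⟩ := ih1
      refine ⟨𝒢, h𝒢ne, ?_, rfl⟩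
      intro B hB
      refine groundingBar_mk (.or_pos_l (h𝒢 B hB).1) ?_
      intro b hb
      exact lt_size_or_l (bar_size (h𝒢 B hB).1 b hb)
  | orIr h1 ih1 =>
      obtain ⟨𝒢, h𝒢ne, h𝒢, rfl⟩ := ih1
      refine ⟨𝒢, h𝒢ne, ?_, rfl⟩
      intro B hB
      refine groundingBar_mk (.or_pos_r (h𝒢 B hB).1) ?_
      intro b hb
      exact lt_size_or_r (bar_size (h𝒢 B hB).1 b hb)
  | orIboth hs h1 h2 ih1 ih2 => exact absurd hs (by simp)
  | nandIl h1 ih1 =>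
      obtain ⟨𝒢, h𝒢ne, h𝒢, rfl⟩ := ih1
      refine ⟨𝒢, h𝒢ne, ?_, rfl⟩
      intro B hB
      have hinv := bar_of_neg (h𝒢 B hB).1
      refine groundingBar_mk (.neg true (.and_neg_l hinv)) ?_
      intro b hb
      have := bar_size hinv b hb
      simp only [size]; omega
  | nandIr h1 ih1 =>
      obtain ⟨𝒢, h𝒢ne, h𝒢, rfl⟩ := ih1
      refine ⟨𝒢, h𝒢ne, ?_, rfl⟩
      intro B hB
      have hinv := bar_of_neg (h𝒢 B hB).1
      refine groundingBar_mk (.neg true (.and_neg_r hinv)) ?_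
      intro b hb
      have := bar_size hinv b hb
      simp only [size]; omega
  | nandIboth hs h1 h2 ih1 ih2 => exact absurd hs (by simp)
  | norI h1 h2 ih1 ih2 =>
      obtain ⟨𝒢, h𝒢ne, h𝒢, rfl⟩ := ih1
      obtain ⟨𝒟, h𝒟ne, h𝒟, rfl⟩ := ih2
      refine ⟨Finset.image₂ (· ∪ ·) 𝒢 𝒟, Finset.Nonempty.image₂ h𝒢ne h𝒟ne, ?_,
        (sup_image₂ h𝒢ne h𝒟ne).symm⟩
      intro B hB
      rw [Finset.mem_image₂] at hB
      obtain ⟨G, hG, D, hD, rfl⟩ := hB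
      refine groundingBar_mk
        (.neg true (.or_neg (bar_of_neg (h𝒢 G hG).1) (bar_of_neg (h𝒟 D hD).1))) ?_
      intro b hb
      rcases Finset.mem_union.1 hb with h | h
      · have := bar_size (bar_of_neg (h𝒢 G hG).1) b h
        simp only [size]; omega
      · have := bar_size (bar_of_neg (h𝒟 D hD).1) b h
        simp only [size]; omega
  | nnI h1 ih1 =>
      obtain ⟨𝒢, h𝒢ne, h𝒢, rfl⟩ := ih1
      refine ⟨𝒢, h𝒢ne, ?_, rfl⟩
      intro B hB
      refine groundingBar_mk (.neg true (.neg false (h𝒢 B hB).1)) ?_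
      intro b hb
      have := bar_size (h𝒢 B hB).1 b hb
      simp only [size]; omega
  | andE hmem h1 ih1 =>
      rename_i Γ' fβ fγ fδ
      refine elim_step hmem ?_ ⟨_, Finset.mem_insert_self _ _⟩ ?_ ih1
      · rintro q ψ hq
        cases q
        · rw [sgn_false] at hq
          exact absurd hq (by simp)
        · rw [sgn_true] at hq
          subst hq
          have hp : ({fβ, fγ} : Finset Formula) = {sgn true fβ} ∪ {sgn true fγ} := by
            rw [sgn_true, sgn_true, ← Finset.insert_eq]
          rw [hp]
          exact .and_pos (.triv true fβ) (.triv true fγ)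
      · intro t ht
        rcases Finset.mem_insert.1 ht with rfl | ht
        · exact add_two_le_and_l
        · rw [Finset.mem_singleton] at ht; subst ht
          exact add_two_le_and_r
  | orEl hmem h1 ih1 =>
      rename_i Γ' fβ fγ fδ
      refine elim_step hmem ?_ (Finset.singleton_nonempty _) ?_ ih1
      · rintro q ψ hq
        cases q
        · rw [sgn_false] at hq
          exact absurd hq (by simp)
        · rw [sgn_true] at hq
          subst hq
          exact .or_pos_l (.triv true fβ)
      · intro t ht
        rw [Finset.mem_singleton] at ht; subst ht
        exact add_two_le_or_l
  | orEr hmem h1 ih1 =>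
      rename_i Γ' fβ fγ fδ
      refine elim_step hmem ?_ (Finset.singleton_nonempty _) ?_ ih1
      · rintro q ψ hq
        cases q
        · rw [sgn_false] at hq
          exact absurd hq (by simp)
        · rw [sgn_true] at hq
          subst hq
          exact .or_pos_r (.triv true fγ)
      · intro t ht
        rw [Finset.mem_singleton] at ht; subst ht
        exact add_two_le_or_r
  | orEboth hs hmem h1 ih1 => exact absurd hs (by simp)
  | nandEl hmem h1 ih1 =>
      rename_i Γ' fβ fγ fδ
      refine elim_step hmem ?_ (Finset.singleton_nonempty _) ?_ ih1
      · rintro q ψ hq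
        cases q
        · rw [sgn_false] at hq
          injection hq with hq
          subst hq
          exact .and_neg_l (.triv false fβ)
        · rw [sgn_true] at hq
          subst hq
          exact .neg true (.and_neg_l (.triv false fβ))
      · intro t ht
        rw [Finset.mem_singleton] at ht; subst ht
        have h := add_two_le_and_l (β := fβ) (γ := fγ)
        simp only [size] at *
        omega
  | nandEr hmem h1 ih1 =>
      rename_i Γ' fβ fγ fδ
      refine elim_step hmem ?_ (Finset.singleton_nonempty _) ?_ ih1
      · rintro q ψ hq
        cases q
        · rw [sgn_false] at hq
          injection hq with hq
          subst hq
          exact .and_neg_r (.triv false fγ)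
        · rw [sgn_true] at hq
          subst hq
          exact .neg true (.and_neg_r (.triv false fγ))
      · intro t ht
        rw [Finset.mem_singleton] at ht; subst ht
        have h := add_two_le_and_r (β := fβ) (γ := fγ)
        simp only [size] at *
        omega
  | nandEboth hs hmem h1 ih1 => exact absurd hs (by simp)
  | norE hmem h1 ih1 =>
      rename_i Γ' fβ fγ fδ
      have hp : ({fβ.neg, fγ.neg} : Finset Formula) = {sgn false fβ} ∪ {sgn false fγ} := by
        rw [sgn_false, sgn_false, ← Finset.insert_eq]
      refine elim_step hmem ?_ ⟨_, Finset.mem_insert_self _ _⟩ ?_ ih1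
      · rintro q ψ hq
        cases q
        · rw [sgn_false] at hq
          injection hq with hq
          subst hq
          rw [hp]
          exact .or_neg (.triv false fβ) (.triv false fγ)
        · rw [sgn_true] at hq
          subst hq
          rw [hp]
          exact .neg true (.or_neg (.triv false fβ) (.triv false fγ))
      · intro t ht
        rcases Finset.mem_insert.1 ht with rfl | ht
        · have := one_le_size fγ; simp only [size]; omega
        · rw [Finset.mem_singleton] at ht; subst ht
          have := one_le_size fβ; simp only [size]; omega
  | nnE hmem h1 ih1 =>
      rename_i Γ' fβ fδ
      refine elim_step hmem ?_ (Finset.singleton_nonempty _) ?_ ih1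
      · rintro q ψ hq
        cases q
        · rw [sgn_false] at hq
          injection hq with hq
          subst hq
          exact .neg false (.triv true fβ)
        · rw [sgn_true] at hq
          subst hq
          exact .neg true (.neg false (.triv true fβ))
      · intro t ht
        rw [Finset.mem_singleton] at ht; subst ht
        simp only [size]; omega
  | am ha h1 h2 ih1 ih2 =>
      obtain ⟨𝒢, h𝒢ne, h𝒢, rfl⟩ := ih1
      obtain ⟨𝒟, h𝒟ne, h𝒟, rfl⟩ := ih2
      refine ⟨𝒢 ∪ 𝒟, Finset.Nonempty.mono Finset.subset_union_left h𝒢ne, ?_, ?_⟩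
      · intro B hB
        rcases Finset.mem_union.1 hB with h | h
        · exact h𝒢 B h
        · exact h𝒟 B h
      · rw [Finset.sup_union, Finset.sup_eq_union]
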